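/- Let P and Q be probability distributions on a finite set X and suppose Q is a (p,δ,Δ)-contaminated reweighting of P, witnessed by w : X → ℝ and Bad ⊆ X. Let λ := (∑_{x∈X} P(x)·w(x))⁻¹. Then 1/(1+ε(p)) ≤ λ ≤ 1+τ(p) ≤ 1+ε(p), and d_TV(P,Q) ≤ δ/(2+δ) + (1+δ)·p·Δ/(1+δp). -/

import Mathlib

private lemma abs_eq_max_add' (y : ℝ) : |y| = max y 0 + max (-y) 0 := by
  rcases le_total y 0 with h | h
  · rw [abs_of_nonpos h, max_eq_right h, max_eq_left (neg_nonneg.2 h)]; ring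
  · rw [abs_of_nonneg h, max_eq_left h, max_eq_right (neg_nonpos.2 h)]; ring

private lemma max_sub_max' (y : ℝ) : max y 0 - max (-y) 0 = y := by
  rcases le_total y 0 with h | h
  · rw [max_eq_right h, max_eq_left (neg_nonneg.2 h)]; ring
  · rw [max_eq_left h, max_eq_right (neg_nonpos.2 h)]; ring

private lemma scalar_h7 (p q δ Δ : ℝ) (hδ0 : 0 ≤ δ) (hΔ0 : 0 ≤ Δ)
    (hq0 : 0 ≤ q) (hqp : q ≤ p) (hp0 : 0 ≤ p) :
    q * ((Δ - δ) * (1 + δ * p) - p * Δ * (1 + δ) ^ 2) ≤ p * Δ * (1 - q) := by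
  nlinarith [mul_nonneg (sub_nonneg.2 hqp) hΔ0,
    mul_nonneg (mul_nonneg (mul_nonneg hδ0 hq0) hp0) hΔ0,
    mul_nonneg (mul_nonneg (mul_nonneg (mul_nonneg hδ0 hδ0) hq0) hp0) hΔ0,
    mul_nonneg hq0 hδ0,
    mul_nonneg (mul_nonneg (mul_nonneg hδ0 hδ0) hq0) hp0]

set_option maxHeartbeats 4000000 in
theorem contaminated_reweighting_bounds
    {X : Type*} [Fintype X] (P Q : X → ℝ)
    (hP0 : ∀ x, 0 ≤ P x) (hP1 : ∑ x, P x = 1)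
    (p δ Δ : ℝ) (hδ0 : 0 ≤ δ) (hδΔ : δ ≤ Δ) (hp0 : 0 ≤ p) (hp1 : p ≤ 1)
    (w : X → ℝ) (Bad : Finset X)
    (hw : ∀ x, 0 < w x)
    (hQ : ∀ x, Q x = P x * w x / ∑ y, P y * w y)
    (hgood : ∀ x ∉ Bad, 1 / (1 + δ) ≤ w x ∧ w x ≤ 1 + δ)
    (hall : ∀ x, 1 / (1 + Δ) ≤ w x ∧ w x ≤ 1 + Δ)
    (hBad : ∑ x ∈ Bad, P x ≤ p)
    (lam : ℝ) (hlam : lam = (∑ x, P x * w x)⁻¹)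
    (ε τ : ℝ)
    (hε : ε = (1 - p) * δ + p * Δ)
    (hτ : τ = ((1 - p) / (1 + δ) + p / (1 + Δ))⁻¹ - 1) :
    (1 / (1 + ε) ≤ lam ∧ lam ≤ 1 + τ ∧ 1 + τ ≤ 1 + ε) ∧
      (1 / 2) * ∑ x, |P x - Q x| ≤
        δ / (2 + δ) + (1 + δ) * p * Δ / (1 + δ * p) := by
  classical
  have hδ1 : (0:ℝ) < 1 + δ := by linarith
  have hΔ0 : (0:ℝ) ≤ Δ := hδ0.trans hδΔ
  have hΔ1 : (0:ℝ) < 1 + Δ := by linarith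
  set q := ∑ x ∈ Bad, P x with hqdef
  have hq0 : 0 ≤ q := Finset.sum_nonneg fun x _ => hP0 x
  have hqp : q ≤ p := hBad
  have hsplitP := Finset.sum_add_sum_compl Bad P
  rw [hP1] at hsplitP
  have hqc : ∑ x ∈ Badᶜ, P x = 1 - q := by rw [← hqdef] at hsplitP; linarith
  have hq1 : q ≤ 1 := by
    have : (0:ℝ) ≤ ∑ x ∈ Badᶜ, P x := Finset.sum_nonneg fun x _ => hP0 x
    linarith [hqc ▸ this]
  set S := ∑ x, P x * w x with hSdef
  have hSsplit := Finset.sum_add_sum_compl Bad (fun x => P x * w x)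
  -- upper bound on S
  have hSub : S ≤ 1 + ((1 - p) * δ + p * Δ) := by
    have h1 : ∑ x ∈ Bad, P x * w x ≤ q * (1 + Δ) := by
      rw [hqdef, Finset.sum_mul]
      exact Finset.sum_le_sum fun x _ => mul_le_mul_of_nonneg_left (hall x).2 (hP0 x)
    have h2 : ∑ x ∈ Badᶜ, P x * w x ≤ (1 - q) * (1 + δ) := by
      rw [← hqc, Finset.sum_mul]
      exact Finset.sum_le_sum fun x hx =>
        mul_le_mul_of_nonneg_left (hgood x (Finset.mem_compl.mp hx)).2 (hP0 x)
    have hqΔδ : q * (Δ - δ) ≤ p * (Δ - δ) :=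
      mul_le_mul_of_nonneg_right hqp (by linarith)
    rw [hSdef, ← hSsplit]
    linarith
  -- lower bound on S
  have hSlb : (1 - p) / (1 + δ) + p / (1 + Δ) ≤ S := by
    have h1 : q * (1 / (1 + Δ)) ≤ ∑ x ∈ Bad, P x * w x := by
      rw [hqdef, Finset.sum_mul]
      exact Finset.sum_le_sum fun x _ => mul_le_mul_of_nonneg_left (hall x).1 (hP0 x)
    have h2 : (1 - q) * (1 / (1 + δ)) ≤ ∑ x ∈ Badᶜ, P x * w x := by
      rw [← hqc, Finset.sum_mul]
      exact Finset.sum_le_sum fun x hx =>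
        mul_le_mul_of_nonneg_left (hgood x (Finset.mem_compl.mp hx)).1 (hP0 x)
    have h3 : 1 / (1 + Δ) ≤ 1 / (1 + δ) := by
      apply one_div_le_one_div_of_le hδ1; linarith
    have h4 : (p - q) * (1 / (1 + δ) - 1 / (1 + Δ)) ≥ 0 :=
      mul_nonneg (by linarith) (by linarith)
    have e1 : (1 - p) / (1 + δ) = (1 - p) * (1 / (1 + δ)) := by ring
    have e2 : p / (1 + Δ) = p * (1 / (1 + Δ)) := by ring
    rw [hSdef, ← hSsplit, e1, e2]
    linarith
  set D := (1 - p) / (1 + δ) + p / (1 + Δ) with hDdef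
  have hD0 : 0 < D := by
    have h1 : (1 - p) / (1 + Δ) ≤ (1 - p) / (1 + δ) := by
      apply div_le_div_of_nonneg_left (by linarith) hδ1
      linarith
    have h2 : (1 - p) / (1 + Δ) + p / (1 + Δ) = 1 / (1 + Δ) := by
      rw [← add_div]; norm_num
    have h3 : (0:ℝ) < 1 / (1 + Δ) := by positivity
    rw [hDdef]; linarith
  have hS0 : 0 < S := lt_of_lt_of_le hD0 hSlb
  have hε0 : 0 ≤ (1 - p) * δ + p * Δ := by
    have := mul_nonneg (show (0:ℝ) ≤ 1 - p by linarith) hδ0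
    have := mul_nonneg hp0 hΔ0
    linarith
  -- part 1 goals
  have goal1a : 1 / (1 + ε) ≤ lam := by
    rw [hlam, hε, one_div]
    exact inv_anti₀ hS0 hSub
  have goal1b : lam ≤ 1 + τ := by
    rw [hlam, hτ]
    have : S⁻¹ ≤ D⁻¹ := inv_anti₀ hD0 hSlb
    rw [hDdef] at this
    linarith
  have goal1c : 1 + τ ≤ 1 + ε := by
    rw [hτ, hε]
    have key : (1 + δ) * (1 + Δ) ≤
        (1 + ((1 - p) * δ + p * Δ)) * ((1 - p) * (1 + Δ) + p * (1 + δ)) := by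
      nlinarith only [hp0, hp1, hδ0, hδΔ,
        mul_nonneg (mul_nonneg hp0 (show (0:ℝ) ≤ 1 - p by linarith))
        (sq_nonneg (Δ - δ))]
    have hDeq : D = ((1 - p) * (1 + Δ) + p * (1 + δ)) / ((1 + δ) * (1 + Δ)) := by
      rw [hDdef]; field_simp
    have hNpos : 0 < (1 - p) * (1 + Δ) + p * (1 + δ) := by
      have := hDeq ▸ hD0
      by_contra hcon
      push_neg at hcon
      have : ((1 - p) * (1 + Δ) + p * (1 + δ)) / ((1 + δ) * (1 + Δ)) ≤ 0 :=
        div_nonpos_of_nonpos_of_nonneg hcon (by positivity)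
      linarith
    have hinv : D⁻¹ ≤ 1 + ((1 - p) * δ + p * Δ) := by
      rw [hDeq, inv_div]
      rw [div_le_iff₀ hNpos]
      linarith only [key]
    rw [hDdef] at hinv
    linarith
  ---- Part 2 ----
  set wt : X → ℝ := fun x => max (1 + δ)⁻¹ (min (1 + δ) (w x)) with hwtdef
  have hwt_lb : ∀ x, (1 + δ)⁻¹ ≤ wt x := fun x => le_max_left _ _
  have hinv1 : (1 + δ)⁻¹ ≤ 1 := by
    rw [show (1:ℝ) = 1⁻¹ by norm_num]
    exact inv_anti₀ one_pos (by linarith)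
  have hwt_ub : ∀ x, wt x ≤ 1 + δ := fun x =>
    max_le (by linarith) (min_le_left _ _)
  have hwt_pos : ∀ x, 0 < wt x := fun x =>
    lt_of_lt_of_le (by positivity) (hwt_lb x)
  have hwt_lb' : ∀ x, 1 ≤ (1 + δ) * wt x := by
    intro x
    calc (1:ℝ) = (1 + δ) * (1 + δ)⁻¹ := (mul_inv_cancel₀ hδ1.ne').symm
    _ ≤ (1 + δ) * wt x := mul_le_mul_of_nonneg_left (hwt_lb x) hδ1.le
  have hwt_good : ∀ x ∉ Bad, wt x = w x := by
    intro x hx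
    have h := hgood x hx
    rw [one_div] at h
    show max (1 + δ)⁻¹ (min (1 + δ) (w x)) = w x
    rw [min_eq_right h.2]
    exact max_eq_right h.1
  have hw_lb' : ∀ x, 1 ≤ (1 + Δ) * w x := by
    intro x
    have h := (hall x).1
    rw [one_div] at h
    calc (1:ℝ) = (1 + Δ) * (1 + Δ)⁻¹ := (mul_inv_cancel₀ hΔ1.ne').symm
    _ ≤ (1 + Δ) * w x := mul_le_mul_of_nonneg_left h hΔ1.le
  have hkey1 : ∀ x, w x * (1 + δ) ≤ (1 + Δ) * wt x := by
    intro x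
    rcases le_total (w x) (1 + δ) with h | h
    · have h1 : w x ≤ wt x := by
        calc w x = min (1 + δ) (w x) := (min_eq_right h).symm
        _ ≤ wt x := le_max_right _ _
      nlinarith [hw x, hwt_pos x]
    · have h1 : (1 + δ) ≤ wt x := by
        calc (1 + δ) = min (1 + δ) (w x) := (min_eq_left h).symm
        _ ≤ wt x := le_max_right _ _
      nlinarith [(hall x).2]
  have hkey2 : ∀ x, wt x * (1 + δ) ≤ (1 + Δ) * w x := by
    intro x
    rcases le_total ((1 + δ)⁻¹) (w x) with h | h
    · have h1 : wt x ≤ w x := by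
        apply max_le h
        exact min_le_right _ _
      nlinarith [hw x]
    · have h1 : wt x = (1 + δ)⁻¹ := by
        apply max_eq_left
        exact le_trans (min_le_right _ _) h
      rw [h1]
      rw [inv_mul_cancel₀ hδ1.ne']
      exact hw_lb' x
  set St := ∑ x, P x * wt x with hStdef
  have hSt_lb' : 1 ≤ (1 + δ) * St := by
    have : ∑ x, P x * 1 ≤ ∑ x, P x * ((1 + δ) * wt x) :=
      Finset.sum_le_sum fun x _ => mul_le_mul_of_nonneg_left (hwt_lb' x) (hP0 x)
    simp only [mul_one] at this
    rw [hP1] at this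
    calc (1:ℝ) ≤ ∑ x, P x * ((1 + δ) * wt x) := this
    _ = (1 + δ) * St := by rw [hStdef, Finset.mul_sum]; congr 1; ext x; ring
  have hSt_ub : St ≤ 1 + δ := by
    have : ∑ x, P x * wt x ≤ ∑ x, P x * (1 + δ) :=
      Finset.sum_le_sum fun x _ => mul_le_mul_of_nonneg_left (hwt_ub x) (hP0 x)
    rw [← Finset.sum_mul, hP1, one_mul] at this
    exact this
  have hSt0 : 0 < St := by
    by_contra hcon
    push_neg at hcon
    have := mul_nonpos_of_nonneg_of_nonpos hδ1.le hcon
    linarith [hSt_lb']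
  set Qt : X → ℝ := fun x => P x * wt x / St with hQtdef
  have hQt0 : ∀ x, 0 ≤ Qt x := fun x =>
    div_nonneg (mul_nonneg (hP0 x) (hwt_pos x).le) hSt0.le
  have hQtsum : ∑ x, Qt x = 1 := by
    rw [hQtdef, ← Finset.sum_div, ← hStdef, div_self hSt0.ne']
  have hQ0 : ∀ x, 0 ≤ Q x := fun x => by
    rw [hQ x]
    exact div_nonneg (mul_nonneg (hP0 x) (hw x).le) hS0.le
  have hQsum : ∑ x, Q x = 1 := by
    rw [Finset.sum_congr rfl fun x _ => hQ x, ← Finset.sum_div, div_self hS0.ne']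
  -- T1
  have hsum_PQt : ∑ x, (Qt x - P x) = 0 := by
    rw [Finset.sum_sub_distrib, hQtsum, hP1, sub_self]
  set T1 := ∑ x, max (Qt x - P x) 0 with hT1def
  have hT1' : ∑ x, max (P x - Qt x) 0 = T1 := by
    have e : ∀ x, max (P x - Qt x) 0 = max (Qt x - P x) 0 - (Qt x - P x) := by
      intro x
      have h := max_sub_max' (Qt x - P x)
      have h2 : P x - Qt x = -(Qt x - P x) := by ring
      rw [h2]; linarith
    rw [Finset.sum_congr rfl fun x _ => e x, Finset.sum_sub_distrib, hsum_PQt,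
      sub_zero, hT1def]
  have habs1 : ∑ x, |P x - Qt x| = 2 * T1 := by
    have e : ∀ x, |P x - Qt x| = max (P x - Qt x) 0 + max (Qt x - P x) 0 := by
      intro x
      have h := abs_eq_max_add' (P x - Qt x)
      have h2 : -(P x - Qt x) = Qt x - P x := by ring
      rw [h2] at h; exact h
    rw [Finset.sum_congr rfl fun x _ => e x, Finset.sum_add_distrib, hT1',
      ← hT1def]
    ring
  have hT1_bound : T1 ≤ δ / (2 + δ) := by
    rcases eq_or_lt_of_le hδ0 with hδeq | hδpos
    · -- δ = 0
      have hwt1 : ∀ x, wt x = 1 := by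
        intro x
        show max (1 + δ)⁻¹ (min (1 + δ) (w x)) = 1
        rw [← hδeq]
        norm_num
      have hSt1 : St = 1 := by
        rw [hStdef, Finset.sum_congr rfl fun x _ => by rw [hwt1 x, mul_one]]
        exact hP1
      have hQtP : ∀ x, Qt x = P x := by
        intro x
        show P x * wt x / St = P x
        rw [hwt1 x, hSt1, mul_one, div_one]
      have : T1 = 0 := by
        rw [hT1def, Finset.sum_congr rfl fun x _ => by rw [hQtP x, sub_self]]
        simp
      rw [this, ← hδeq]
      norm_num
    · -- δ > 0
      have hmulSt : ∀ x, max (Qt x - P x) 0 * St = P x * max (wt x - St) 0 := by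
        intro x
        have h1 : Qt x - P x = P x * (wt x - St) / St := by
          show P x * wt x / St - P x = P x * (wt x - St) / St
          field_simp
        rcases le_total (wt x) St with h | h
        · have h2 : Qt x - P x ≤ 0 := by
            rw [h1]
            apply div_nonpos_of_nonpos_of_nonneg _ hSt0.le
            exact mul_nonpos_of_nonneg_of_nonpos (hP0 x) (by linarith)
          rw [max_eq_right h2, max_eq_right (by linarith : wt x - St ≤ 0)]
          ring
        · have h2 : 0 ≤ Qt x - P x := by
            rw [h1]
            apply div_nonneg _ hSt0.le
            exact mul_nonneg (hP0 x) (by linarith)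
          rw [max_eq_left h2, max_eq_left (by linarith : (0:ℝ) ≤ wt x - St), h1]
          field_simp
      have hmulSt' : ∀ x, max (P x - Qt x) 0 * St = P x * max (St - wt x) 0 := by
        intro x
        have h1 : P x - Qt x = P x * (St - wt x) / St := by
          show P x - P x * wt x / St = P x * (St - wt x) / St
          field_simp
        rcases le_total (wt x) St with h | h
        · have h2 : 0 ≤ P x - Qt x := by
            rw [h1]
            apply div_nonneg _ hSt0.le
            exact mul_nonneg (hP0 x) (by linarith)
          rw [max_eq_left h2, max_eq_left (by linarith : (0:ℝ) ≤ St - wt x), h1]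
          field_simp
        · have h2 : P x - Qt x ≤ 0 := by
            rw [h1]
            apply div_nonpos_of_nonpos_of_nonneg _ hSt0.le
            exact mul_nonpos_of_nonneg_of_nonpos (hP0 x) (by linarith)
          rw [max_eq_right h2, max_eq_right (by linarith : St - wt x ≤ 0)]
          ring
      have hsum1 : T1 * St = ∑ x, P x * max (wt x - St) 0 := by
        rw [hT1def, Finset.sum_mul]
        exact Finset.sum_congr rfl fun x _ => hmulSt x
      have hsum2 : T1 * St = ∑ x, P x * max (St - wt x) 0 := by
        rw [← hT1', Finset.sum_mul]
        exact Finset.sum_congr rfl fun x _ => hmulSt' x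
      -- weights
      have hpt : ∀ x, (St * (1 + δ) - 1) * (P x * max (wt x - St) 0)
          + (((1 + δ) - St) * (1 + δ)) * (P x * max (St - wt x) 0)
          ≤ P x * ((St * (1 + δ) - 1) * ((1 + δ) - St)) := by
        intro x
        rcases le_total (wt x) St with h | h
        · rw [max_eq_right (by linarith : wt x - St ≤ 0),
            max_eq_left (by linarith : (0:ℝ) ≤ St - wt x)]
          have hb : (1 + δ) * (St - wt x) ≤ St * (1 + δ) - 1 := by
            linarith [hwt_lb' x]
          have hcP : 0 ≤ P x * ((1 + δ) - St) :=
            mul_nonneg (hP0 x) (by linarith [hSt_ub])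
          have hkey := mul_le_mul_of_nonneg_left hb hcP
          nlinarith only [hkey]
        · rw [max_eq_left (by linarith : (0:ℝ) ≤ wt x - St),
            max_eq_right (by linarith : St - wt x ≤ 0)]
          have hb : wt x - St ≤ (1 + δ) - St := by linarith [hwt_ub x]
          have hcP : 0 ≤ P x * (St * (1 + δ) - 1) :=
            mul_nonneg (hP0 x) (by linarith [hSt_lb'])
          have hkey := mul_le_mul_of_nonneg_left hb hcP
          nlinarith only [hkey]
      have hcomb : T1 * St * (δ * (2 + δ)) ≤ (St * (1 + δ) - 1) * ((1 + δ) - St) := by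
        have e : T1 * St * (δ * (2 + δ))
            = ∑ x, ((St * (1 + δ) - 1) * (P x * max (wt x - St) 0)
              + (((1 + δ) - St) * (1 + δ)) * (P x * max (St - wt x) 0)) := by
          rw [Finset.sum_add_distrib, ← Finset.mul_sum, ← Finset.mul_sum,
            ← hsum1, ← hsum2]
          ring
        rw [e]
        calc ∑ x, ((St * (1 + δ) - 1) * (P x * max (wt x - St) 0)
              + (((1 + δ) - St) * (1 + δ)) * (P x * max (St - wt x) 0))
            ≤ ∑ x, P x * ((St * (1 + δ) - 1) * ((1 + δ) - St)) :=
              Finset.sum_le_sum fun x _ => hpt x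
        _ = (St * (1 + δ) - 1) * ((1 + δ) - St) := by
              rw [← Finset.sum_mul, hP1, one_mul]
      have hfinal : (St * (1 + δ) - 1) * ((1 + δ) - St) ≤ St * δ ^ 2 := by
        nlinarith only [mul_nonneg hδ1.le (sq_nonneg (St - 1))]
      have h2δ : (0:ℝ) < 2 + δ := by linarith
      rw [le_div_iff₀ h2δ]
      nlinarith only [hcomb, hfinal, h2δ, hδpos, hSt0, mul_pos hSt0 hδpos]
  -- T2
  have hsum_QtQ : ∑ x, (Q x - Qt x) = 0 := by
    rw [Finset.sum_sub_distrib, hQsum, hQtsum, sub_self]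
  set T2 := ∑ x, max (Q x - Qt x) 0 with hT2def
  have hT2' : ∑ x, max (Qt x - Q x) 0 = T2 := by
    have e : ∀ x, max (Qt x - Q x) 0 = max (Q x - Qt x) 0 - (Q x - Qt x) := by
      intro x
      have h := max_sub_max' (Q x - Qt x)
      have h2 : Qt x - Q x = -(Q x - Qt x) := by ring
      rw [h2]; linarith
    rw [Finset.sum_congr rfl fun x _ => e x, Finset.sum_sub_distrib, hsum_QtQ,
      sub_zero, hT2def]
  have habs2 : ∑ x, |Qt x - Q x| = 2 * T2 := by
    have e : ∀ x, |Qt x - Q x| = max (Qt x - Q x) 0 + max (Q x - Qt x) 0 := by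
      intro x
      have h := abs_eq_max_add' (Qt x - Q x)
      have h2 : -(Qt x - Q x) = Q x - Qt x := by ring
      rw [h2] at h; exact h
    rw [Finset.sum_congr rfl fun x _ => e x, Finset.sum_add_distrib, hT2',
      ← hT2def]
    ring
  set TB := ∑ x ∈ Bad, P x * wt x with hTBdef
  have hQB : ∑ x ∈ Bad, Qt x = TB / St := by
    rw [hTBdef, Finset.sum_div]
  set ρ := (Δ - δ) / (1 + δ) with hρdef
  have hρ0 : 0 ≤ ρ := div_nonneg (by linarith) hδ1.le
  have hρ' : (1:ℝ) - ρ ≤ (1 + δ) / (1 + Δ) := by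
    rw [hρdef, sub_le_iff_le_add, div_add_div _ _ hΔ1.ne' hδ1.ne',
      le_div_iff₀ (by positivity : (0:ℝ) < (1 + Δ) * (1 + δ))]
    nlinarith only [sq_nonneg (Δ - δ)]
  have hbadpt1 : S ≥ St → ∀ x, max (Q x - Qt x) 0 ≤ ρ * Qt x := by
    intro hc x
    apply max_le _ (mul_nonneg hρ0 (hQt0 x))
    have e1 : Q x ≤ (1 + Δ) * (P x * wt x) / ((1 + δ) * St) := by
      rw [hQ x, div_le_div_iff₀ hS0 (by positivity)]
      calc P x * w x * ((1 + δ) * St) = P x * (w x * (1 + δ)) * St := by ring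
      _ ≤ P x * ((1 + Δ) * wt x) * St :=
        mul_le_mul_of_nonneg_right
          (mul_le_mul_of_nonneg_left (hkey1 x) (hP0 x)) hSt0.le
      _ ≤ P x * ((1 + Δ) * wt x) * S :=
        mul_le_mul_of_nonneg_left hc
          (mul_nonneg (hP0 x) (mul_nonneg hΔ1.le (hwt_pos x).le))
      _ = (1 + Δ) * (P x * wt x) * S := by ring
    have e2 : (1 + Δ) * (P x * wt x) / ((1 + δ) * St) = Qt x + ρ * Qt x := by
      show (1 + Δ) * (P x * wt x) / ((1 + δ) * St)
        = P x * wt x / St + (Δ - δ) / (1 + δ) * (P x * wt x / St)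
      field_simp
      ring
    rw [e2] at e1
    linarith
  have hbadpt2 : St ≥ S → ∀ x, max (Qt x - Q x) 0 ≤ ρ * Qt x := by
    intro hc x
    apply max_le _ (mul_nonneg hρ0 (hQt0 x))
    have e1 : (1 + δ) * (P x * wt x) / ((1 + Δ) * St) ≤ Q x := by
      rw [hQ x, div_le_div_iff₀ (by positivity) hS0]
      calc (1 + δ) * (P x * wt x) * S = P x * (wt x * (1 + δ)) * S := by ring
      _ ≤ P x * ((1 + Δ) * w x) * S :=
        mul_le_mul_of_nonneg_right
          (mul_le_mul_of_nonneg_left (hkey2 x) (hP0 x)) hS0.le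
      _ ≤ P x * ((1 + Δ) * w x) * St :=
        mul_le_mul_of_nonneg_left hc
          (mul_nonneg (hP0 x) (mul_nonneg hΔ1.le (hw x).le))
      _ = P x * w x * ((1 + Δ) * St) := by ring
    have e2 : Qt x * (1 - ρ) ≤ (1 + δ) * (P x * wt x) / ((1 + Δ) * St) := by
      have h3 : Qt x * ((1 + δ) / (1 + Δ)) = (1 + δ) * (P x * wt x) / ((1 + Δ) * St) := by
        show P x * wt x / St * ((1 + δ) / (1 + Δ)) = _
        field_simp
      calc Qt x * (1 - ρ) ≤ Qt x * ((1 + δ) / (1 + Δ)) :=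
            mul_le_mul_of_nonneg_left hρ' (hQt0 x)
      _ = _ := h3
    nlinarith only [e1, e2]
  have hgoodpt1 : S ≥ St → ∀ x ∉ Bad, max (Q x - Qt x) 0 = 0 := by
    intro hc x hx
    apply max_eq_right
    rw [sub_nonpos, hQ x]
    have e : Qt x = P x * w x / St := by
      show P x * wt x / St = P x * w x / St
      rw [hwt_good x hx]
    rw [e]
    apply div_le_div_of_nonneg_left (mul_nonneg (hP0 x) (hw x).le) hSt0 hc
  have hgoodpt2 : St ≥ S → ∀ x ∉ Bad, max (Qt x - Q x) 0 = 0 := by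
    intro hc x hx
    apply max_eq_right
    rw [sub_nonpos, hQ x]
    have e : Qt x = P x * w x / St := by
      show P x * wt x / St = P x * w x / St
      rw [hwt_good x hx]
    rw [e]
    apply div_le_div_of_nonneg_left (mul_nonneg (hP0 x) (hw x).le) hS0 hc
  have hT2_bound : T2 ≤ ρ * (TB / St) := by
    have hsum_rQt : ∑ x ∈ Bad, ρ * Qt x = ρ * (TB / St) := by
      rw [← Finset.mul_sum, hQB]
    rcases le_total St S with hc | hc
    · have e := (Finset.sum_add_sum_compl Bad (fun x => max (Q x - Qt x) 0)).symm
      rw [hT2def, e]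
      have h1 : ∑ x ∈ Badᶜ, max (Q x - Qt x) 0 = 0 :=
        Finset.sum_eq_zero fun x hx => hgoodpt1 hc x (Finset.mem_compl.mp hx)
      have h2 : ∑ x ∈ Bad, max (Q x - Qt x) 0 ≤ ∑ x ∈ Bad, ρ * Qt x :=
        Finset.sum_le_sum fun x _ => hbadpt1 hc x
      rw [h1, add_zero, ← hsum_rQt]
      exact h2
    · rw [← hT2']
      have e := (Finset.sum_add_sum_compl Bad (fun x => max (Qt x - Q x) 0)).symm
      rw [e]
      have h1 : ∑ x ∈ Badᶜ, max (Qt x - Q x) 0 = 0 :=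
        Finset.sum_eq_zero fun x hx => hgoodpt2 hc x (Finset.mem_compl.mp hx)
      have h2 : ∑ x ∈ Bad, max (Qt x - Q x) 0 ≤ ∑ x ∈ Bad, ρ * Qt x :=
        Finset.sum_le_sum fun x _ => hbadpt2 hc x
      rw [h1, add_zero, ← hsum_rQt]
      exact h2
  -- final bound for the bad part
  have hTB0 : 0 ≤ TB :=
    Finset.sum_nonneg fun x _ => mul_nonneg (hP0 x) (hwt_pos x).le
  have hTBub : TB ≤ q * (1 + δ) := by
    rw [hTBdef, hqdef, Finset.sum_mul]
    exact Finset.sum_le_sum fun x _ => mul_le_mul_of_nonneg_left (hwt_ub x) (hP0 x)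
  set TG := ∑ x ∈ Badᶜ, P x * wt x with hTGdef
  have hTG0 : 0 ≤ TG :=
    Finset.sum_nonneg fun x _ => mul_nonneg (hP0 x) (hwt_pos x).le
  have hTGlb : 1 - q ≤ (1 + δ) * TG := by
    have h : ∑ x ∈ Badᶜ, P x * 1 ≤ ∑ x ∈ Badᶜ, P x * ((1 + δ) * wt x) :=
      Finset.sum_le_sum fun x _ => mul_le_mul_of_nonneg_left (hwt_lb' x) (hP0 x)
    simp only [mul_one] at h
    rw [hqc] at h
    calc 1 - q ≤ ∑ x ∈ Badᶜ, P x * ((1 + δ) * wt x) := h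
    _ = (1 + δ) * TG := by rw [hTGdef, Finset.mul_sum]; congr 1; ext x; ring
  have hStsplit : St = TB + TG :=
    (Finset.sum_add_sum_compl Bad fun x => P x * wt x).symm
  have hδp1 : (0:ℝ) < 1 + δ * p := by positivity
  have hT2final : ρ * (TB / St) ≤ (1 + δ) * p * Δ / (1 + δ * p) := by
    rw [hρdef, div_mul_div_comm, div_le_div_iff₀ (by positivity) hδp1]
    have hgoal : (Δ - δ) * TB * (1 + δ * p)
        ≤ p * Δ * (1 + δ) ^ 2 * TB + p * Δ * (1 + δ) ^ 2 * TG := by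
      have h6 : p * Δ * (1 + δ) * (1 - q) ≤ p * Δ * (1 + δ) * ((1 + δ) * TG) :=
        mul_le_mul_of_nonneg_left hTGlb (by positivity)
      rcases le_or_gt ((Δ - δ) * (1 + δ * p)) (p * Δ * (1 + δ) ^ 2) with hc | hc
      · have h5 : TB * ((Δ - δ) * (1 + δ * p)) ≤ TB * (p * Δ * (1 + δ) ^ 2) :=
          mul_le_mul_of_nonneg_left hc hTB0
        have h8 : 0 ≤ p * Δ * (1 + δ) ^ 2 * TG := by positivity
        nlinarith only [h5, h8]
      · have h5 : TB * ((Δ - δ) * (1 + δ * p) - p * Δ * (1 + δ) ^ 2)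
            ≤ (q * (1 + δ)) * ((Δ - δ) * (1 + δ * p) - p * Δ * (1 + δ) ^ 2) :=
          mul_le_mul_of_nonneg_right hTBub (by linarith)
        have h7' := scalar_h7 p q δ Δ hδ0 hΔ0 hq0 hqp hp0
        have h7 := mul_le_mul_of_nonneg_left h7' hδ1.le
        nlinarith only [h5, h7, h6]
    calc (Δ - δ) * TB * (1 + δ * p)
        ≤ p * Δ * (1 + δ) ^ 2 * TB + p * Δ * (1 + δ) ^ 2 * TG := hgoal
    _ = (1 + δ) * p * Δ * ((1 + δ) * (TB + TG)) := by ring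
    _ = (1 + δ) * p * Δ * ((1 + δ) * St) := by rw [← hStsplit]
  -- assemble
  refine ⟨⟨goal1a, goal1b, goal1c⟩, ?_⟩
  have tri : ∑ x, |P x - Q x| ≤ (∑ x, |P x - Qt x|) + ∑ x, |Qt x - Q x| := by
    rw [← Finset.sum_add_distrib]
    exact Finset.sum_le_sum fun x _ => abs_sub_le (P x) (Qt x) (Q x)
  linarith only [tri, habs1, habs2, hT1_bound, hT2_bound, hT2final]
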